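/- In the ℤ₂-graded associative conformal algebra W = k[D] ⊗ Aₙ[v], the elements V := v−D, Xᵢ := (v−D)ξᵢ, Pᵢ := ∂ᵢ (i = 1,…,n), with V even and Xᵢ, Pᵢ odd, satisfy the W-relations. (Equivalently, the map φ₁ : v ↦ v−D, ξᵢ ↦ (v−D)ξᵢ, ∂ᵢ ↦ ∂ᵢ defines a homomorphism of Lie conformal superalgebras from Wₙ into W^{(−)}.) -/

import Mathlib

/-! ### Conformal algebras: basic definitions -/

/-- A conformal algebra over a field `k`: a `k`-vector space with a linear map `D`
and a family of bilinear `n`-th products satisfying (C1) locality, (C2) and (C3). -/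
structure ConfAlg (k : Type) [Field k] (C : Type) [AddCommGroup C] [Module k C] where
  Dmap : C →ₗ[k] C
  prod : ℕ → C →ₗ[k] C →ₗ[k] C
  locality : ∀ a b : C, ∃ N : ℕ, ∀ m, N ≤ m → prod m a b = 0
  axC2 : ∀ (m : ℕ) (a b : C), prod m (Dmap a) b = -((m : k)) • prod (m - 1) a b
  axC3 : ∀ (m : ℕ) (a b : C),
    prod m a (Dmap b) = Dmap (prod m a b) + (m : k) • prod (m - 1) a b

section BasicDefs

variable {k : Type} [Field k] {C : Type} [AddCommGroup C] [Module k C]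

/-- Left associativity identity for a conformal algebra. -/
def ConfAlg.IsAssoc (A : ConfAlg k C) : Prop :=
  ∀ (nn m : ℕ) (a b c : C),
    A.prod m (A.prod nn a b) c =
      ∑ s ∈ Finset.range (nn + 1),
        ((-1 : k) ^ s * (nn.choose s : k)) • A.prod (nn - s) a (A.prod (m + s) b c)

/-- A ℤ₂-grading of a conformal algebra: `grade false` is the even part,
`grade true` the odd part. -/
structure ConfGrading (A : ConfAlg k C) where
  grade : Bool → Submodule k C
  inf_bot : grade false ⊓ grade true = ⊥
  sup_top : grade false ⊔ grade true = ⊤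
  D_mem : ∀ (i : Bool), ∀ x ∈ grade i, A.Dmap x ∈ grade i
  prod_mem : ∀ (i j : Bool) (m : ℕ) (x y : C), x ∈ grade i → y ∈ grade j →
    A.prod m x y ∈ grade (xor i j)

/-- The "conjugate" product `{b ∘ₘ a} = ∑_{s ≥ 0} ((-1)^{m+s}/s!) • Dˢ (b ∘_{m+s} a)`,
a finite sum by locality, expressed via `finsum`. -/
noncomputable def cbrR (D : C →ₗ[k] C) (P : ℕ → C →ₗ[k] C →ₗ[k] C)
    (m : ℕ) (b a : C) : C :=
  ∑ᶠ s : ℕ, ((-1 : k) ^ (m + s) * ((Nat.factorial s : k))⁻¹) • (D ^ s) (P (m + s) b a)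

/-- The super-commutator `[a ∘ₘ b] = a ∘ₘ b - (-1)^{p(a)p(b)} {b ∘ₘ a}` for homogeneous
`a, b` of parities `pa, pb` (`false` = even, `true` = odd). -/
noncomputable def sbrR (D : C →ₗ[k] C) (P : ℕ → C →ₗ[k] C →ₗ[k] C)
    (pa pb : Bool) (m : ℕ) (a b : C) : C :=
  P m a b - (if pa && pb then (-1 : k) else 1) • cbrR D P m b a

/-- The defining relations of the Lie conformal superalgebra `Wₙ`, for homogeneous
elements `V` (even), `X i`, `Pd i` (odd) of an associative conformal algebra with
derivation `D` and products `P`. -/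
noncomputable def WRelsR (D : C →ₗ[k] C) (P : ℕ → C →ₗ[k] C →ₗ[k] C) {n : ℕ}
    (V : C) (X Pd : Fin n → C) : Prop :=
  (∀ i j, sbrR D P true true 0 (X i) (X j) = - sbrR D P true true 0 (X j) (X i)) ∧
  (∀ (m : ℕ) (i j), sbrR D P true true m (Pd i) (Pd j) = 0) ∧
  (∀ i j, sbrR D P true true 0 (Pd j) (X i) = if i = j then V else 0) ∧
  (∀ i, sbrR D P false true 0 V (X i) = D (X i)) ∧
  (∀ i, sbrR D P true false 0 (X i) V = D (X i)) ∧
  (∀ i, sbrR D P true false 1 (X i) V = (2 : k) • X i) ∧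
  (∀ j, sbrR D P true false 0 (Pd j) V = 0) ∧
  (∀ j, sbrR D P true false 1 (Pd j) V = Pd j) ∧
  (∀ i j, sbrR D P true true 0 (X i) (X j)
      = ((2 : k))⁻¹ • D (sbrR D P true true 1 (X i) (X j))) ∧
  (sbrR D P false false 0 V V = D V) ∧
  (sbrR D P false false 1 V V = (2 : k) • V) ∧
  (∀ m, 2 ≤ m →
    (∀ i j, sbrR D P true true m (X i) (X j) = 0) ∧
    (∀ j, sbrR D P false true m V (Pd j) = 0) ∧
    (∀ i j, sbrR D P true true m (X i) (Pd j) = 0) ∧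
    (∀ i, sbrR D P false true m V (X i) = 0) ∧
    sbrR D P false false m V V = 0)

end BasicDefs
set_option maxSynthPendingDepth 5

/-! ### The algebra `Aₙ` and the conformal algebra `W = k[D] ⊗ Aₙ[v]` -/

/-- Generators of the algebra `Aₙ`: `xi i` stands for `ξᵢ`, `pa i` for `∂ᵢ`. -/
inductive WGen (n : ℕ) : Type
  | xi : Fin n → WGen n
  | pa : Fin n → WGen n

/-- The defining relations of `Aₙ`:
`ξᵢξⱼ + ξⱼξᵢ = 0`, `∂ᵢ∂ⱼ + ∂ⱼ∂ᵢ = 0`, `∂ᵢξⱼ + ξⱼ∂ᵢ = δᵢⱼ·1`. -/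
inductive ARel (k : Type) [Field k] (n : ℕ) :
    FreeAlgebra k (WGen n) → FreeAlgebra k (WGen n) → Prop
  | xixi (i j : Fin n) : ARel k n
      (FreeAlgebra.ι k (WGen.xi i) * FreeAlgebra.ι k (WGen.xi j)
        + FreeAlgebra.ι k (WGen.xi j) * FreeAlgebra.ι k (WGen.xi i)) 0
  | papa (i j : Fin n) : ARel k n
      (FreeAlgebra.ι k (WGen.pa i) * FreeAlgebra.ι k (WGen.pa j)
        + FreeAlgebra.ι k (WGen.pa j) * FreeAlgebra.ι k (WGen.pa i)) 0
  | paxi (i j : Fin n) : ARel k n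
      (FreeAlgebra.ι k (WGen.pa i) * FreeAlgebra.ι k (WGen.xi j)
        + FreeAlgebra.ι k (WGen.xi j) * FreeAlgebra.ι k (WGen.pa i))
      (if i = j then 1 else 0)

/-- The algebra `Aₙ`. -/
abbrev An (k : Type) [Field k] (n : ℕ) := RingQuot (ARel k n)

/-- `Aₙ[v]`: polynomials over `Aₙ` in the variable `v` (= `Polynomial.X`). -/
abbrev Av (k : Type) [Field k] (n : ℕ) := Polynomial (An k n)

/-- `W = k[D] ⊗ Aₙ[v]`, realized as polynomials in the (outer) variable `D`
with coefficients in `Aₙ[v]`; the element `Dᵗ ⊗ w` is `(monomial t) w`. -/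
abbrev Wc (k : Type) [Field k] (n : ℕ) := Polynomial (Av k n)

/-- The generator `ξᵢ ∈ Aₙ`. -/
noncomputable def xg (k : Type) [Field k] (n : ℕ) (i : Fin n) : An k n :=
  RingQuot.mkAlgHom k (ARel k n) (FreeAlgebra.ι k (WGen.xi i))

/-- The generator `∂ᵢ ∈ Aₙ`. -/
noncomputable def dg (k : Type) [Field k] (n : ℕ) (i : Fin n) : An k n :=
  RingQuot.mkAlgHom k (ARel k n) (FreeAlgebra.ι k (WGen.pa i))

/-- The element `v = 1 ⊗ v ∈ W`. -/
noncomputable def vW (k : Type) [Field k] (n : ℕ) : Wc k n :=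
  Polynomial.C Polynomial.X

/-- The element `ξᵢ = 1 ⊗ ξᵢ ∈ W`. -/
noncomputable def xiW (k : Type) [Field k] (n : ℕ) (i : Fin n) : Wc k n :=
  Polynomial.C (Polynomial.C (xg k n i))

/-- The element `∂ᵢ = 1 ⊗ ∂ᵢ ∈ W`. -/
noncomputable def paW (k : Type) [Field k] (n : ℕ) (i : Fin n) : Wc k n :=
  Polynomial.C (Polynomial.C (dg k n i))

/-- The element `v - D = 1 ⊗ v - D ⊗ 1 ∈ W`. -/
noncomputable def vmD (k : Type) [Field k] (n : ℕ) : Wc k n :=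
  (Polynomial.C (Polynomial.X : Av k n) : Wc k n) - (Polynomial.X : Wc k n)

/-- The map `D` on `W`: multiplication by the outer variable. -/
noncomputable def Dm (k : Type) [Field k] (n : ℕ) : Wc k n →ₗ[k] Wc k n :=
  LinearMap.mulLeft k (Polynomial.X : Wc k n)

/-- The condition characterizing the conformal products of `W`:
`(1 ⊗ f) ∘ₘ (1 ⊗ g) = 1 ⊗ f·(∂ᵐ g/∂vᵐ)` together with axioms (C2) and (C3). -/
def IsWProd (k : Type) [Field k] (n : ℕ)
    (P : ℕ → Wc k n →ₗ[k] Wc k n →ₗ[k] Wc k n) : Prop :=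
  (∀ (m : ℕ) (f g : Av k n),
      P m (Polynomial.C f) (Polynomial.C g)
        = Polynomial.C (f * (fun q => Polynomial.derivative q)^[m] g)) ∧
  (∀ (m : ℕ) (a b : Wc k n), P m (Dm k n a) b = -((m : k)) • P (m - 1) a b) ∧
  (∀ (m : ℕ) (a b : Wc k n),
      P m a (Dm k n b) = Dm k n (P m a b) + (m : k) • P (m - 1) a b)

/-- The locality function `N_W(x,y) = min {N | x ∘ₘ y = 0 for all m ≥ N}`. -/
noncomputable def locNW (k : Type) [Field k] (n : ℕ)
    (P : ℕ → Wc k n →ₗ[k] Wc k n →ₗ[k] Wc k n) (x y : Wc k n) : ℕ :=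
  sInf {N : ℕ | ∀ m, N ≤ m → P m x y = 0}

/-- The smallest `D`-invariant subspace of `W` closed under all the products and
containing a set `S`. -/
noncomputable def confCl (k : Type) [Field k] (n : ℕ)
    (P : ℕ → Wc k n →ₗ[k] Wc k n →ₗ[k] Wc k n) (S : Set (Wc k n)) :
    Submodule k (Wc k n) :=
  sInf {U : Submodule k (Wc k n) | S ⊆ U ∧ (∀ x ∈ U, Dm k n x ∈ U) ∧
    ∀ (m : ℕ), ∀ x ∈ U, ∀ y ∈ U, P m x y ∈ U}

/-- The conformal subalgebra `C₁ ⊆ W`, generated by `v - D`, `(v - D)ξᵢ`, `∂ᵢ`. -/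
noncomputable def C1sub (k : Type) [Field k] (n : ℕ)
    (P : ℕ → Wc k n →ₗ[k] Wc k n →ₗ[k] Wc k n) : Submodule k (Wc k n) :=
  confCl k n P
    ({vmD k n} ∪ Set.range (fun i => vmD k n * xiW k n i) ∪ Set.range (paW k n))

/-- The conformal subalgebra `C₂ ⊆ W`, generated by `v`, `vξᵢ`, `∂ᵢ`. -/
noncomputable def C2sub (k : Type) [Field k] (n : ℕ)
    (P : ℕ → Wc k n →ₗ[k] Wc k n →ₗ[k] Wc k n) : Submodule k (Wc k n) :=
  confCl k n P
    ({vW k n} ∪ Set.range (fun i => vW k n * xiW k n i) ∪ Set.range (paW k n))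


set_option linter.unusedSectionVars false
section AuxProof

variable {k : Type} [Field k] [CharZero k] {n : ℕ}

noncomputable def EE (f g : Av k n) : Wc k n := Polynomial.C f - Dm k n (Polynomial.C g)

lemma rel_xx (i j : Fin n) : xg k n i * xg k n j = -(xg k n j * xg k n i) := by
  have h := RingQuot.mkAlgHom_rel k (ARel.xixi (k := k) i j)
  simp only [map_add, map_mul, map_zero] at h
  exact eq_neg_of_add_eq_zero_left h

lemma rel_dd (i j : Fin n) : dg k n i * dg k n j = -(dg k n j * dg k n i) := by
  have h := RingQuot.mkAlgHom_rel k (ARel.papa (k := k) i j)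
  simp only [map_add, map_mul, map_zero] at h
  exact eq_neg_of_add_eq_zero_left h

lemma rel_dx (i j : Fin n) :
    dg k n i * xg k n j + xg k n j * dg k n i = if i = j then 1 else 0 := by
  have h := RingQuot.mkAlgHom_rel k (ARel.paxi (k := k) i j)
  simp only [map_add, map_mul, apply_ite, map_one, map_zero] at h
  split_ifs at h ⊢ <;> exact h

lemma vmD_eq : vmD k n = EE Polynomial.X 1 := by
  simp [vmD, EE, Dm, LinearMap.mulLeft_apply]

lemma X_eq (i : Fin n) : vmD k n * xiW k n i
    = EE (Polynomial.X * Polynomial.C (xg k n i)) (Polynomial.C (xg k n i)) := by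
  simp only [vmD, EE, Dm, LinearMap.mulLeft_apply, xiW, sub_mul, map_mul]

lemma P_eq (i : Fin n) : paW k n i = EE (Polynomial.C (dg k n i)) 0 := by
  simp [paW, EE, Dm]

lemma avCX (a : An k n) : (Polynomial.C a : Av k n) * Polynomial.X = Polynomial.X * Polynomial.C a :=
  (Polynomial.X_mul).symm

lemma avXCXC (a b : An k n) :
    ((Polynomial.X : Av k n) * Polynomial.C a) * (Polynomial.X * Polynomial.C b)
      = Polynomial.X^2 * Polynomial.C (a*b) := by
  calc ((Polynomial.X : Av k n) * Polynomial.C a) * (Polynomial.X * Polynomial.C b)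
      = Polynomial.X * (Polynomial.C a * Polynomial.X) * Polynomial.C b := by noncomm_ring
    _ = Polynomial.X * (Polynomial.X * Polynomial.C a) * Polynomial.C b := by rw [avCX]
    _ = Polynomial.X^2 * (Polynomial.C a * Polynomial.C b) := by noncomm_ring
    _ = Polynomial.X^2 * Polynomial.C (a*b) := by rw [← map_mul]

lemma avXCC (a b : An k n) :
    ((Polynomial.X : Av k n) * Polynomial.C a) * Polynomial.C b
      = Polynomial.X * Polynomial.C (a*b) := by
  rw [mul_assoc, ← map_mul]

lemma avCXC (a b : An k n) :
    (Polynomial.C a : Av k n) * (Polynomial.X * Polynomial.C b)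
      = Polynomial.X * Polynomial.C (a*b) := by
  calc (Polynomial.C a : Av k n) * (Polynomial.X * Polynomial.C b)
      = (Polynomial.C a * Polynomial.X) * Polynomial.C b := by noncomm_ring
    _ = (Polynomial.X * Polynomial.C a) * Polynomial.C b := by rw [avCX]
    _ = Polynomial.X * Polynomial.C (a*b) := avXCC a b

lemma avXXC (b : An k n) :
    (Polynomial.X : Av k n) * (Polynomial.X * Polynomial.C b)
      = Polynomial.X^2 * Polynomial.C b := by
  rw [← mul_assoc, ← sq]

lemma avXCX (a : An k n) :
    ((Polynomial.X : Av k n) * Polynomial.C a) * Polynomial.X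
      = Polynomial.X^2 * Polynomial.C a := by
  rw [mul_assoc, avCX, ← mul_assoc, ← sq]

lemma avXX : (Polynomial.X : Av k n) * Polynomial.X = Polynomial.X^2 := (sq _).symm

lemma avdXC (a : An k n) :
    Polynomial.derivative ((Polynomial.X : Av k n) * Polynomial.C a) = Polynomial.C a := by
  simp

lemma rel_xd (i j : Fin n) :
    xg k n i * dg k n j = (if j = i then 1 else 0) - dg k n j * xg k n i := by
  have h := rel_dx (k := k) (n := n) j i
  exact eq_sub_of_add_eq' h

lemma hD1 : Dm k n 1 = (Polynomial.X : Wc k n) := by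
  simp [Dm]


lemma prodE (Pr : ℕ → Wc k n →ₗ[k] Wc k n →ₗ[k] Wc k n) (hPr : IsWProd k n Pr)
    (m : ℕ) (f g f' g' : Av k n) :
    Pr m (EE f g) (EE f' g') =
      Polynomial.C (f * (fun q => Polynomial.derivative q)^[m] f')
      - Dm k n (Polynomial.C (f * (fun q => Polynomial.derivative q)^[m] g'))
      - (m : k) • Polynomial.C (f * (fun q => Polynomial.derivative q)^[m-1] g')
      + (m : k) • Polynomial.C (g * (fun q => Polynomial.derivative q)^[m-1] f')
      - (m : k) • Dm k n (Polynomial.C (g * (fun q => Polynomial.derivative q)^[m-1] g'))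
      - ((m : k) * ((m-1 : ℕ) : k)) • Polynomial.C (g * (fun q => Polynomial.derivative q)^[m-1-1] g') := by
  obtain ⟨hC, h2, h3⟩ := hPr
  simp only [EE, map_sub, LinearMap.sub_apply, h3, h2, hC, map_add, map_smul, map_neg,
    neg_smul, smul_sub, smul_add, smul_neg, smul_smul]
  module


lemma iterD_succ (p : Av k n) (t : ℕ) (h : Polynomial.derivative p = 0) :
    (fun q : Av k n => Polynomial.derivative q)^[t+1] p = 0 := by
  rw [Function.iterate_succ_apply]
  show (fun q : Av k n => Polynomial.derivative q)^[t] (Polynomial.derivative p) = 0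
  rw [h]
  exact Function.iterate_fixed (by simp) t

lemma iterD_succ2 (p : Av k n) (t : ℕ)
    (h : Polynomial.derivative (Polynomial.derivative p) = 0) :
    (fun q : Av k n => Polynomial.derivative q)^[t+2] p = 0 := by
  rw [show t+2 = (t+1)+1 from rfl, Function.iterate_succ_apply]
  exact iterD_succ _ t h

lemma Pr_ge3 (Pr : ℕ → Wc k n →ₗ[k] Wc k n →ₗ[k] Wc k n) (hPr : IsWProd k n Pr)
    (f g f' g' : Av k n)
    (h1 : Polynomial.derivative (Polynomial.derivative f') = 0)
    (h2 : Polynomial.derivative g' = 0)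
    (m : ℕ) (hm : 3 ≤ m) : Pr m (EE f g) (EE f' g') = 0 := by
  obtain ⟨t, rfl⟩ : ∃ t, m = t + 3 := ⟨m - 3, by omega⟩
  rw [prodE Pr hPr]
  have e1 : (fun q : Av k n => Polynomial.derivative q)^[t+3] f' = 0 := by
    rw [show t+3 = (t+1)+2 from rfl]; exact iterD_succ2 _ _ h1
  have e2 : (fun q : Av k n => Polynomial.derivative q)^[t+3] g' = 0 := by
    rw [show t+3 = (t+2)+1 from rfl]; exact iterD_succ _ _ h2
  have e3 : (fun q : Av k n => Polynomial.derivative q)^[t+3-1] g' = 0 := by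
    rw [show t+3-1 = (t+1)+1 from rfl]; exact iterD_succ _ _ h2
  have e4 : (fun q : Av k n => Polynomial.derivative q)^[t+3-1] f' = 0 := by
    rw [show t+3-1 = t+2 from rfl]; exact iterD_succ2 _ _ h1
  have e5 : (fun q : Av k n => Polynomial.derivative q)^[t+3-1-1] g' = 0 := by
    rw [show t+3-1-1 = t+1 from rfl]; exact iterD_succ _ _ h2
  rw [e1, e2, e3, e4, e5]
  simp

lemma Pr2' (Pr : ℕ → Wc k n →ₗ[k] Wc k n →ₗ[k] Wc k n) (hPr : IsWProd k n Pr)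
    (f g f' g' : Av k n)
    (h1 : Polynomial.derivative (Polynomial.derivative f') = 0)
    (h2 : Polynomial.derivative g' = 0) :
    Pr 2 (EE f g) (EE f' g')
      = (2:k) • Polynomial.C (g * Polynomial.derivative f')
        - (2:k) • Polynomial.C (g * g') := by
  rw [prodE Pr hPr]
  have e1 : (fun q : Av k n => Polynomial.derivative q)^[2] f' = 0 := iterD_succ2 _ 0 h1
  have e2 : (fun q : Av k n => Polynomial.derivative q)^[2] g' = 0 := by
    exact iterD_succ2 _ 0 (by rw [h2]; simp)
  have e3 : (fun q : Av k n => Polynomial.derivative q)^[2-1] g' = 0 := iterD_succ _ 0 h2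
  rw [e1, e2, e3]
  norm_num

lemma cbr_eval (Pr : ℕ → Wc k n →ₗ[k] Wc k n →ₗ[k] Wc k n)
    (m : ℕ) (b a : Wc k n) (hz : ∀ j, 3 ≤ j → Pr j b a = 0) :
    cbrR (Dm k n) Pr m b a
      = ∑ s ∈ Finset.range 3,
          ((-1:k)^(m+s) * ((Nat.factorial s : k))⁻¹) • ((Dm k n) ^ s) (Pr (m+s) b a) := by
  apply finsum_eq_sum_of_support_subset
  intro s hs
  simp only [Finset.coe_range, Set.mem_Iio]
  by_contra hlt
  push_neg at hlt
  exact hs (by simp only [hz (m+s) (by omega), map_zero, smul_zero])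

lemma cbr_zero (Pr : ℕ → Wc k n →ₗ[k] Wc k n →ₗ[k] Wc k n)
    (m : ℕ) (b a : Wc k n) (hz : ∀ j, m ≤ j → Pr j b a = 0) :
    cbrR (Dm k n) Pr m b a = 0 := by
  rw [cbrR]
  have h : ∀ s : ℕ, ((-1:k)^(m+s) * ((Nat.factorial s : k))⁻¹) • ((Dm k n) ^ s) (Pr (m+s) b a)
      = 0 := fun s => by rw [hz (m+s) (by omega), map_zero, smul_zero]
  rw [finsum_congr h, finsum_zero]


variable (Pr : ℕ → Wc k n →ₗ[k] Wc k n →ₗ[k] Wc k n) (hPr : IsWProd k n Pr)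
  (f g f' g' : Av k n)

include hPr

lemma Pr0E : Pr 0 (EE f g) (EE f' g')
    = Polynomial.C (f * f') - Dm k n (Polynomial.C (f * g')) := by
  rw [prodE Pr hPr]
  norm_num

lemma Pr1E (h2 : Polynomial.derivative g' = 0) :
    Pr 1 (EE f g) (EE f' g')
      = Polynomial.C (f * Polynomial.derivative f') - Polynomial.C (f * g')
        + Polynomial.C (g * f') - Dm k n (Polynomial.C (g * g')) := by
  rw [prodE Pr hPr]
  norm_num [h2]

lemma cbr0E (h1 : Polynomial.derivative (Polynomial.derivative f') = 0)
    (h2 : Polynomial.derivative g' = 0) :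
    cbrR (Dm k n) Pr 0 (EE f g) (EE f' g')
      = Polynomial.C (f * f') - Dm k n (Polynomial.C (f * Polynomial.derivative f'))
        - Dm k n (Polynomial.C (g * f'))
        + Dm k n (Dm k n (Polynomial.C (g * Polynomial.derivative f'))) := by
  rw [cbr_eval Pr 0 _ _ (fun j hj => Pr_ge3 Pr hPr f g f' g' h1 h2 j hj)]
  rw [Finset.sum_range_succ, Finset.sum_range_succ, Finset.sum_range_one]
  norm_num
  rw [Pr0E Pr hPr, Pr1E Pr hPr f g f' g' h2, Pr2' Pr hPr f g f' g' h1 h2]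
  rw [pow_two, Module.End.mul_apply]
  simp only [map_sub, map_add, map_smul, map_mul]
  module

lemma cbr1E (h1 : Polynomial.derivative (Polynomial.derivative f') = 0)
    (h2 : Polynomial.derivative g' = 0) :
    cbrR (Dm k n) Pr 1 (EE f g) (EE f' g')
      = - Polynomial.C (f * Polynomial.derivative f') + Polynomial.C (f * g')
        - Polynomial.C (g * f')
        + (2:k) • Dm k n (Polynomial.C (g * Polynomial.derivative f'))
        - Dm k n (Polynomial.C (g * g')) := by
  rw [cbr_eval Pr 1 _ _ (fun j hj => Pr_ge3 Pr hPr f g f' g' h1 h2 j hj)]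
  rw [Finset.sum_range_succ, Finset.sum_range_succ, Finset.sum_range_one]
  norm_num
  rw [Pr1E Pr hPr f g f' g' h2, Pr2' Pr hPr f g f' g' h1 h2,
    Pr_ge3 Pr hPr f g f' g' h1 h2 3 (by norm_num)]
  simp only [map_sub, map_add, map_smul, map_zero, smul_zero, map_mul]
  module

lemma cbr2E (h1 : Polynomial.derivative (Polynomial.derivative f') = 0)
    (h2 : Polynomial.derivative g' = 0) :
    cbrR (Dm k n) Pr 2 (EE f g) (EE f' g')
      = (2:k) • Polynomial.C (g * Polynomial.derivative f')
        - (2:k) • Polynomial.C (g * g') := by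
  rw [cbr_eval Pr 2 _ _ (fun j hj => Pr_ge3 Pr hPr f g f' g' h1 h2 j hj)]
  rw [Finset.sum_range_succ, Finset.sum_range_succ, Finset.sum_range_one]
  norm_num
  rw [Pr2' Pr hPr f g f' g' h1 h2,
    Pr_ge3 Pr hPr f g f' g' h1 h2 3 (by norm_num),
    Pr_ge3 Pr hPr f g f' g' h1 h2 4 (by norm_num)]
  simp

lemma cbr_geE (h1 : Polynomial.derivative (Polynomial.derivative f') = 0)
    (h2 : Polynomial.derivative g' = 0)
    (h3 : g * Polynomial.derivative f' = g * g')
    (m : ℕ) (hm : 2 ≤ m) :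
    cbrR (Dm k n) Pr m (EE f g) (EE f' g') = 0 := by
  apply cbr_zero
  intro j hj
  rcases Nat.lt_or_ge j 3 with hj3 | hj3
  · have : j = 2 := by omega
    subst this
    rw [Pr2' Pr hPr f g f' g' h1 h2, h3, sub_self]
  · exact Pr_ge3 Pr hPr f g f' g' h1 h2 j hj3

lemma Pr_geE (h1 : Polynomial.derivative (Polynomial.derivative f') = 0)
    (h2 : Polynomial.derivative g' = 0)
    (h3 : g * Polynomial.derivative f' = g * g')
    (m : ℕ) (hm : 2 ≤ m) :
    Pr m (EE f g) (EE f' g') = 0 := by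
  rcases Nat.lt_or_ge m 3 with hm3 | hm3
  · have : m = 2 := by omega
    subst this
    rw [Pr2' Pr hPr f g f' g' h1 h2, h3, sub_self]
  · exact Pr_ge3 Pr hPr f g f' g' h1 h2 m hm3


end AuxProof

set_option maxHeartbeats 1000000 in
set_option synthInstance.maxHeartbeats 1000000 in
/-- the elements `V = v - D`, `Xᵢ = (v - D)ξᵢ` (odd), `Pᵢ = ∂ᵢ` (odd)
of `W` satisfy the defining relations of `Wₙ` (i.e. `φ₁` is a homomorphism of Lie
conformal superalgebras `Wₙ → W⁽⁻⁾`). -/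

theorem stmt_3 (k : Type) [Field k] [CharZero k] (n : ℕ) (hn : 1 ≤ n)
    (Pr : ℕ → Wc k n →ₗ[k] Wc k n →ₗ[k] Wc k n) (hPr : IsWProd k n Pr) :
    WRelsR (Dm k n) Pr (vmD k n) (fun i => vmD k n * xiW k n i) (paW k n) := by
  classical
  have hV1 : Polynomial.derivative (Polynomial.derivative (Polynomial.X : Av k n)) = 0 := by simp
  have hV2 : Polynomial.derivative (1 : Av k n) = 0 := Polynomial.derivative_one
  have hX1 : ∀ i : Fin n, Polynomial.derivative (Polynomial.derivative
      ((Polynomial.X : Av k n) * Polynomial.C (xg k n i))) = 0 := fun i => by simp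
  have hX2 : ∀ i : Fin n, Polynomial.derivative (Polynomial.C (xg k n i) : Av k n) = 0 :=
    fun i => Polynomial.derivative_C
  have hP1 : ∀ i : Fin n, Polynomial.derivative (Polynomial.derivative
      (Polynomial.C (dg k n i) : Av k n)) = 0 := fun i => by simp
  have h00 : Polynomial.derivative (0 : Av k n) = 0 := Polynomial.derivative_zero
  refine ⟨?_, ?_, ?_, ?_, ?_, ?_, ?_, ?_, ?_, ?_, ?_, ?_⟩
  · -- antisymmetry of [X i ∘₀ X j]
    intro i j
    simp only [sbrR]
    simp only [X_eq]
    rw [Pr0E Pr hPr, Pr0E Pr hPr,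
      cbr0E Pr hPr _ _ _ _ (hX1 i) (hX2 i), cbr0E Pr hPr _ _ _ _ (hX1 j) (hX2 j)]
    simp only [avdXC, Polynomial.derivative_X, Polynomial.derivative_C, Polynomial.derivative_one, avXCXC, avXCC, avCXC, avXXC, avXCX, avCX, avXX, ← Polynomial.C_mul, Polynomial.C_0, neg_zero, mul_one, one_mul, mul_zero, zero_mul, map_zero, map_one, map_sub, map_add, map_neg, smul_zero, sub_zero, zero_sub, add_zero, zero_add, neg_neg, one_smul, neg_smul, sub_neg_eq_add, Bool.and_self, Bool.and_false, Bool.false_and, Bool.false_eq_true, ite_false, ite_true, reduceIte, mul_sub, sub_self]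
    rw [rel_xx i j]
    simp only [map_neg, mul_neg, neg_neg, map_sub, map_add]
    module
  · -- [P i ∘ₘ P j] = 0
    intro m i j
    simp only [sbrR, P_eq]
    rcases m with _ | m
    · rw [Pr0E Pr hPr, cbr0E Pr hPr _ _ _ _ (hP1 i) h00]
      simp only [avdXC, Polynomial.derivative_X, Polynomial.derivative_C, Polynomial.derivative_one, avXCXC, avXCC, avCXC, avXXC, avXCX, avCX, avXX, ← Polynomial.C_mul, Polynomial.C_0, neg_zero, mul_one, one_mul, mul_zero, zero_mul, map_zero, map_one, map_sub, map_add, map_neg, smul_zero, sub_zero, zero_sub, add_zero, zero_add, neg_neg, one_smul, neg_smul, sub_neg_eq_add, Bool.and_self, Bool.and_false, Bool.false_and, Bool.false_eq_true, ite_false, ite_true, reduceIte, mul_sub, sub_self]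
      rw [rel_dd i j]
      simp only [map_neg, mul_neg, neg_neg]
      module
    · rcases m with _ | m
      · rw [Pr1E Pr hPr _ _ _ _ h00, cbr1E Pr hPr _ _ _ _ (hP1 i) h00]
        simp only [avdXC, Polynomial.derivative_X, Polynomial.derivative_C, Polynomial.derivative_one, avXCXC, avXCC, avCXC, avXXC, avXCX, avCX, avXX, ← Polynomial.C_mul, Polynomial.C_0, neg_zero, mul_one, one_mul, mul_zero, zero_mul, map_zero, map_one, map_sub, map_add, map_neg, smul_zero, sub_zero, zero_sub, add_zero, zero_add, neg_neg, one_smul, neg_smul, sub_neg_eq_add, Bool.and_self, Bool.and_false, Bool.false_and, Bool.false_eq_true, ite_false, ite_true, reduceIte, mul_sub, sub_self]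
      · rw [Pr_geE Pr hPr _ _ _ _ (hP1 j) h00 (by simp) (m+2) (by omega),
          cbr_geE Pr hPr _ _ _ _ (hP1 i) h00 (by simp) (m+2) (by omega)]
        simp
  · -- [P j ∘₀ X i] = δ V
    intro i j
    simp only [sbrR]
    simp only [X_eq]
    simp only [P_eq]
    rw [Pr0E Pr hPr, cbr0E Pr hPr _ _ _ _ (hP1 j) h00]
    simp only [avdXC, Polynomial.derivative_X, Polynomial.derivative_C, Polynomial.derivative_one, avXCXC, avXCC, avCXC, avXXC, avXCX, avCX, avXX, ← Polynomial.C_mul, Polynomial.C_0, neg_zero, mul_one, one_mul, mul_zero, zero_mul, map_zero, map_one, map_sub, map_add, map_neg, smul_zero, sub_zero, zero_sub, add_zero, zero_add, neg_neg, one_smul, neg_smul, sub_neg_eq_add, Bool.and_self, Bool.and_false, Bool.false_and, Bool.false_eq_true, ite_false, ite_true, reduceIte, mul_sub, sub_self]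
    rw [rel_xd i j]
    by_cases hij : i = j
    · subst hij
      simp only [eq_self_iff_true, if_true, Polynomial.C_1, mul_one, mul_sub, map_sub, map_add, map_neg, map_one]
      rw [hD1]
      simp only [vmD, mul_one, mul_sub, map_sub]
      module
    · rw [if_neg hij, if_neg (fun h => hij h.symm)]
      simp only [zero_sub, map_neg, mul_neg, map_zero]
      module
  · -- [V ∘₀ X i] = D X i
    intro i
    simp only [sbrR]
    simp only [X_eq]
    simp only [vmD_eq]
    rw [Pr0E Pr hPr, cbr0E Pr hPr _ _ _ _ hV1 hV2]
    simp only [avdXC, Polynomial.derivative_X, Polynomial.derivative_C, Polynomial.derivative_one, avXCXC, avXCC, avCXC, avXXC, avXCX, avCX, avXX, ← Polynomial.C_mul, Polynomial.C_0, neg_zero, mul_one, one_mul, mul_zero, zero_mul, map_zero, map_one, map_sub, map_add, map_neg, smul_zero, sub_zero, zero_sub, add_zero, zero_add, neg_neg, one_smul, neg_smul, sub_neg_eq_add, Bool.and_self, Bool.and_false, Bool.false_and, Bool.false_eq_true, ite_false, ite_true, reduceIte, mul_sub, sub_self, EE]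
    module
  · -- [X i ∘₀ V] = D X i
    intro i
    simp only [sbrR]
    simp only [X_eq]
    simp only [vmD_eq]
    rw [Pr0E Pr hPr, cbr0E Pr hPr _ _ _ _ (hX1 i) (hX2 i)]
    simp only [avdXC, Polynomial.derivative_X, Polynomial.derivative_C, Polynomial.derivative_one, avXCXC, avXCC, avCXC, avXXC, avXCX, avCX, avXX, ← Polynomial.C_mul, Polynomial.C_0, neg_zero, mul_one, one_mul, mul_zero, zero_mul, map_zero, map_one, map_sub, map_add, map_neg, smul_zero, sub_zero, zero_sub, add_zero, zero_add, neg_neg, one_smul, neg_smul, sub_neg_eq_add, Bool.and_self, Bool.and_false, Bool.false_and, Bool.false_eq_true, ite_false, ite_true, reduceIte, mul_sub, sub_self, EE]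
    module
  · -- [X i ∘₁ V] = 2 X i
    intro i
    simp only [sbrR]
    simp only [X_eq]
    simp only [vmD_eq]
    rw [Pr1E Pr hPr _ _ _ _ hV2, cbr1E Pr hPr _ _ _ _ (hX1 i) (hX2 i)]
    simp only [avdXC, Polynomial.derivative_X, Polynomial.derivative_C, Polynomial.derivative_one, avXCXC, avXCC, avCXC, avXXC, avXCX, avCX, avXX, ← Polynomial.C_mul, Polynomial.C_0, neg_zero, mul_one, one_mul, mul_zero, zero_mul, map_zero, map_one, map_sub, map_add, map_neg, smul_zero, sub_zero, zero_sub, add_zero, zero_add, neg_neg, one_smul, neg_smul, sub_neg_eq_add, Bool.and_self, Bool.and_false, Bool.false_and, Bool.false_eq_true, ite_false, ite_true, reduceIte, mul_sub, sub_self, EE]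
    module
  · -- [P j ∘₀ V] = 0
    intro j
    simp only [sbrR, vmD_eq, P_eq]
    rw [Pr0E Pr hPr, cbr0E Pr hPr _ _ _ _ (hP1 j) h00]
    simp only [avdXC, Polynomial.derivative_X, Polynomial.derivative_C, Polynomial.derivative_one, avXCXC, avXCC, avCXC, avXXC, avXCX, avCX, avXX, ← Polynomial.C_mul, Polynomial.C_0, neg_zero, mul_one, one_mul, mul_zero, zero_mul, map_zero, map_one, map_sub, map_add, map_neg, smul_zero, sub_zero, zero_sub, add_zero, zero_add, neg_neg, one_smul, neg_smul, sub_neg_eq_add, Bool.and_self, Bool.and_false, Bool.false_and, Bool.false_eq_true, ite_false, ite_true, reduceIte, mul_sub, sub_self]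
  · -- [P j ∘₁ V] = P j
    intro j
    simp only [sbrR, vmD_eq, P_eq]
    rw [Pr1E Pr hPr _ _ _ _ hV2, cbr1E Pr hPr _ _ _ _ (hP1 j) h00]
    simp only [avdXC, Polynomial.derivative_X, Polynomial.derivative_C, Polynomial.derivative_one, avXCXC, avXCC, avCXC, avXXC, avXCX, avCX, avXX, ← Polynomial.C_mul, Polynomial.C_0, neg_zero, mul_one, one_mul, mul_zero, zero_mul, map_zero, map_one, map_sub, map_add, map_neg, smul_zero, sub_zero, zero_sub, add_zero, zero_add, neg_neg, one_smul, neg_smul, sub_neg_eq_add, Bool.and_self, Bool.and_false, Bool.false_and, Bool.false_eq_true, ite_false, ite_true, reduceIte, mul_sub, sub_self, EE]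
  · -- [X i ∘₀ X j] = ½ D [X i ∘₁ X j]
    intro i j
    simp only [sbrR]
    simp only [X_eq]
    rw [Pr0E Pr hPr, Pr1E Pr hPr _ _ _ _ (hX2 j),
      cbr0E Pr hPr _ _ _ _ (hX1 i) (hX2 i), cbr1E Pr hPr _ _ _ _ (hX1 i) (hX2 i)]
    simp only [avdXC, Polynomial.derivative_X, Polynomial.derivative_C, Polynomial.derivative_one, avXCXC, avXCC, avCXC, avXXC, avXCX, avCX, avXX, ← Polynomial.C_mul, Polynomial.C_0, neg_zero, mul_one, one_mul, mul_zero, zero_mul, map_zero, map_one, map_sub, map_add, map_neg, smul_zero, sub_zero, zero_sub, add_zero, zero_add, neg_neg, one_smul, neg_smul, sub_neg_eq_add, Bool.and_self, Bool.and_false, Bool.false_and, Bool.false_eq_true, ite_false, ite_true, reduceIte, mul_sub, sub_self]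
    rw [rel_xx i j]
    simp only [map_neg, mul_neg, neg_neg, map_sub, map_add, map_smul, smul_sub, smul_add, smul_neg, smul_smul]
    module
  · -- [V ∘₀ V] = D V
    simp only [sbrR, vmD_eq]
    rw [Pr0E Pr hPr, cbr0E Pr hPr _ _ _ _ hV1 hV2]
    simp only [avdXC, Polynomial.derivative_X, Polynomial.derivative_C, Polynomial.derivative_one, avXCXC, avXCC, avCXC, avXXC, avXCX, avCX, avXX, ← Polynomial.C_mul, Polynomial.C_0, neg_zero, mul_one, one_mul, mul_zero, zero_mul, map_zero, map_one, map_sub, map_add, map_neg, smul_zero, sub_zero, zero_sub, add_zero, zero_add, neg_neg, one_smul, neg_smul, sub_neg_eq_add, Bool.and_self, Bool.and_false, Bool.false_and, Bool.false_eq_true, ite_false, ite_true, reduceIte, mul_sub, sub_self, EE]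
    module
  · -- [V ∘₁ V] = 2 V
    simp only [sbrR, vmD_eq]
    rw [Pr1E Pr hPr _ _ _ _ hV2, cbr1E Pr hPr _ _ _ _ hV1 hV2]
    simp only [avdXC, Polynomial.derivative_X, Polynomial.derivative_C, Polynomial.derivative_one, avXCXC, avXCC, avCXC, avXXC, avXCX, avCX, avXX, ← Polynomial.C_mul, Polynomial.C_0, neg_zero, mul_one, one_mul, mul_zero, zero_mul, map_zero, map_one, map_sub, map_add, map_neg, smul_zero, sub_zero, zero_sub, add_zero, zero_add, neg_neg, one_smul, neg_smul, sub_neg_eq_add, Bool.and_self, Bool.and_false, Bool.false_and, Bool.false_eq_true, ite_false, ite_true, reduceIte, mul_sub, sub_self, EE]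
    module
  · -- higher products vanish
    intro m hm
    refine ⟨?_, ?_, ?_, ?_, ?_⟩
    · intro i j
      simp only [sbrR]
      simp only [X_eq]
      rw [Pr_geE Pr hPr _ _ _ _ (hX1 j) (hX2 j) (by rw [avdXC]) m hm,
        cbr_geE Pr hPr _ _ _ _ (hX1 i) (hX2 i) (by rw [avdXC]) m hm]
      simp
    · intro j
      simp only [sbrR, vmD_eq, P_eq]
      rw [Pr_geE Pr hPr _ _ _ _ (hP1 j) h00 (by simp) m hm,
        cbr_geE Pr hPr _ _ _ _ hV1 hV2 (by simp) m hm]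
      simp
    · intro i j
      simp only [sbrR]
      simp only [X_eq]
      simp only [P_eq]
      rw [Pr_geE Pr hPr _ _ _ _ (hP1 j) h00 (by simp) m hm,
        cbr_geE Pr hPr _ _ _ _ (hX1 i) (hX2 i) (by rw [avdXC]) m hm]
      simp
    · intro i
      simp only [sbrR]
      simp only [X_eq]
      simp only [vmD_eq]
      rw [Pr_geE Pr hPr _ _ _ _ (hX1 i) (hX2 i) (by rw [avdXC]) m hm,
        cbr_geE Pr hPr _ _ _ _ hV1 hV2 (by simp) m hm]
      simp
    · simp only [sbrR, vmD_eq]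
      rw [Pr_geE Pr hPr _ _ _ _ hV1 hV2 (by simp) m hm,
        cbr_geE Pr hPr _ _ _ _ hV1 hV2 (by simp) m hm]
      simp
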